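/- If p'/q', p/q, p''/q'' are three successive elements (in this order) of the Farey series of order n, then p/q = (p' + p'')/(q' + q''), i.e., the middle fraction equals the mediant of its neighbors. -/

import Mathlib

/-- The Farey series of order `n`: rationals in `[0,1]` (automatically in lowest
terms in `ℚ`) with denominator at most `n`. -/
def farey (n : ℕ) : Set ℚ := {x | 0 ≤ x ∧ x ≤ 1 ∧ x.den ≤ n}

/-- Two consecutive elements of the Farey series are unimodular neighbors. -/
lemma farey_consec (n : ℕ) (x y : ℚ) (hx : x ∈ farey n) (hy : y ∈ farey n)
    (hxy : x < y) (hsucc : ∀ w ∈ farey n, ¬(x < w ∧ w < y)) :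
    y.num * x.den - x.num * y.den = 1 := by
  obtain ⟨hx0, hx1, hxd⟩ := hx
  obtain ⟨hy0, hy1, hyd⟩ := hy
  set a := x.num with ha
  set b : ℤ := (x.den : ℤ) with hbdef
  set p := y.num with hp
  set q : ℤ := (y.den : ℤ) with hqdef
  have hb : 0 < b := Int.natCast_pos.mpr x.pos
  have hq : 0 < q := Int.natCast_pos.mpr y.pos
  have hbn : b ≤ (n : ℤ) := by rw [hbdef]; exact_mod_cast hxd
  have hqn : q ≤ (n : ℤ) := by rw [hqdef]; exact_mod_cast hyd
  -- Bezout from coprimality of a and b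
  have hcop : IsCoprime a b := by
    rw [Int.isCoprime_iff_gcd_eq_one]
    simpa [Int.gcd, ha, hbdef, Nat.Coprime] using x.reduced
  obtain ⟨u, v, huv⟩ := hcop
  set t : ℤ := ((n : ℤ) + u) / b with ht
  set d : ℤ := -u + t * b with hd
  set c : ℤ := v + t * a with hc
  have key : b * c - a * d = 1 := by
    simp only [hc, hd]; ring_nf; linarith [huv]
  have hd_le : d ≤ (n : ℤ) := by
    have := Int.ediv_mul_le ((n : ℤ) + u) (ne_of_gt hb)
    simp only [hd]; linarith
  have hd_gt : (n : ℤ) - b < d := by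
    have := Int.lt_ediv_add_one_mul_self ((n : ℤ) + u) hb
    simp only [hd]; nlinarith
  have hdpos : 0 < d := by linarith
  have hcd : IsCoprime c d := ⟨b, -a, by linarith⟩
  have hcdn : c.natAbs.Coprime d.natAbs := by
    rw [Nat.Coprime, ← Int.gcd, ← Int.isCoprime_iff_gcd_eq_one]; exact hcd
  set w : ℚ := (c : ℚ) / (d : ℚ) with hw
  have hwnum : w.num = c := Rat.num_div_eq_of_coprime hdpos hcdn
  have hwden : (w.den : ℤ) = d := Rat.den_div_eq_of_coprime hdpos hcdn
  have hxeq : x = (a : ℚ) / (b : ℚ) := by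
    rw [ha, hbdef]; push_cast; exact (Rat.num_div_den x).symm
  have hyeq : y = (p : ℚ) / (q : ℚ) := by
    rw [hp, hqdef]; push_cast; exact (Rat.num_div_den y).symm
  have hbQ : (0 : ℚ) < (b : ℚ) := by exact_mod_cast hb
  have hdQ : (0 : ℚ) < (d : ℚ) := by exact_mod_cast hdpos
  have hqQ : (0 : ℚ) < (q : ℚ) := by exact_mod_cast hq
  have hxw : x < w := by
    rw [hxeq, hw, div_lt_div_iff₀ hbQ hdQ]
    have : a * d < c * b := by nlinarith
    exact_mod_cast this
  -- from x < y : p*b - a*q ≥ 1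
  have hxy' : a * q + 1 ≤ p * b := by
    have : (a : ℚ) / b < (p : ℚ) / q := by rw [← hxeq, ← hyeq]; exact hxy
    rw [div_lt_div_iff₀ hbQ hqQ] at this
    have h2 : a * q < p * b := by exact_mod_cast this
    linarith
  rcases lt_trichotomy w y with hlt | heq | hgt
  · -- w strictly between x and y : contradiction
    exfalso
    refine hsucc w ⟨le_of_lt (lt_of_le_of_lt hx0 hxw), le_of_lt (lt_of_lt_of_le hlt hy1), ?_⟩
      ⟨hxw, hlt⟩
    have : (w.den : ℤ) ≤ (n : ℤ) := by rw [hwden]; exact hd_le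
    exact_mod_cast this
  · -- w = y : conclude
    have hnum : p = c := by rw [hp, ← heq, hwnum]
    have hden : q = d := by rw [hqdef, ← heq, hwden]
    rw [hnum, hden]; linarith
  · -- y < w : contradiction via counting
    exfalso
    have : (p : ℚ) / q < (c : ℚ) / d := by rw [← hyeq, ← hw]; exact hgt
    rw [div_lt_div_iff₀ hqQ hdQ] at this
    have h2 : p * d < c * q := by exact_mod_cast this
    have h3 : p * d + 1 ≤ c * q := by linarith
    -- q = b*(c*q - p*d) + d*(p*b - a*q) ≥ b + d > n ≥ q
    nlinarith [key, hxy', h3, hb, hdpos]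

theorem farey_middle_is_mediant (n : ℕ) (hn : 1 ≤ n) (x y z : ℚ)
    (hx : x ∈ farey n) (hy : y ∈ farey n) (hz : z ∈ farey n)
    (hxy : x < y) (hyz : y < z)
    (hsucc₁ : ∀ w ∈ farey n, ¬(x < w ∧ w < y))
    (hsucc₂ : ∀ w ∈ farey n, ¬(y < w ∧ w < z)) :
    y = ((x.num + z.num : ℤ) : ℚ) / ((x.den + z.den : ℕ) : ℚ) := by
  have h1 := farey_consec n x y hx hy hxy hsucc₁
  have h2 := farey_consec n y z hy hz hyz hsucc₂
  have hden : (0 : ℚ) < ((x.den + z.den : ℕ) : ℚ) := by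
    have : 0 < x.den + z.den := Nat.add_pos_left x.pos _
    exact_mod_cast this
  rw [eq_div_iff (ne_of_gt hden)]
  have hkey : y.num * (x.den + z.den : ℤ) = y.den * (x.num + z.num) := by
    push_cast
    nlinarith [h1, h2]
  have hy' : (y.den : ℚ) ≠ 0 := Nat.cast_ne_zero.mpr y.pos.ne'
  have : y = (y.num : ℚ) / (y.den : ℚ) := (Rat.num_div_den y).symm
  rw [this, div_mul_eq_mul_div, div_eq_iff hy']
  have hkeyQ : (y.num : ℚ) * ((x.den : ℚ) + (z.den : ℚ)) = (y.den : ℚ) * ((x.num : ℚ) + (z.num : ℚ)) := by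
    exact_mod_cast hkey
  push_cast
  linear_combination hkeyQ
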